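/- Define F_i(w) := f_i(w − α∇f_i(w)) and F(w) := (1/n)∑_{i=1}^n F_i(w). Then for every α ∈ [0, 1/L] and every w ∈ ℝ^d, (1/n)∑_{i=1}^n ‖∇F_i(w) − ∇F(w)‖² ≤ 3B²α²γ_H² + 192γ_G². -/

import Mathlib

open InnerProductSpace Finset

noncomputable section

section aux

set_option linter.unusedSectionVars false

variable {E : Type*} [NormedAddCommGroup E] [InnerProductSpace ℝ E] [CompleteSpace E]

lemma grad_eq' (p : E → ℝ) (x : E) : fderiv ℝ p x = toDual ℝ E (gradient p x) := by
  rw [gradient, LinearIsometryEquiv.apply_symm_apply]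

lemma norm_fderiv_sub_eq (p q : E → ℝ) (x y : E) :
    ‖fderiv ℝ p x - fderiv ℝ q y‖ = ‖gradient p x - gradient q y‖ := by
  rw [grad_eq', grad_eq', ← map_sub, LinearIsometryEquiv.norm_map]

lemma norm_fderiv_eq' (p : E → ℝ) (x : E) : ‖fderiv ℝ p x‖ = ‖gradient p x‖ := by
  rw [grad_eq', LinearIsometryEquiv.norm_map]

lemma variance_le {n : ℕ} (hn : 0 < n) (x : Fin n → E) (c : E) :
    ∑ i, ‖x i - (1 / (n:ℝ)) • ∑ j, x j‖ ^ 2 ≤ ∑ i, ‖x i - c‖ ^ 2 := by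
  set m := (1 / (n:ℝ)) • ∑ j, x j with hm
  have hnm : (n : ℝ) • m = ∑ j, x j := by
    rw [hm, smul_smul]
    have : (n:ℝ) * (1 / n) = 1 := by
      field_simp
    rw [this, one_smul]
  have hsum : ∑ i, (x i - m) = 0 := by
    rw [Finset.sum_sub_distrib, Finset.sum_const, Finset.card_univ, Fintype.card_fin,
      ← Nat.cast_smul_eq_nsmul ℝ, hnm, sub_self]
  have expand : ∀ i : Fin n, ‖x i - c‖ ^ 2
      = ‖x i - m‖ ^ 2 + 2 * (inner ℝ (x i - m) (m - c) : ℝ) + ‖m - c‖ ^ 2 := by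
    intro i
    have h : x i - c = (x i - m) + (m - c) := by abel
    rw [h, norm_add_sq_real]
  have h2 : ∑ i : Fin n, (2:ℝ) * (inner ℝ (x i - m) (m - c) : ℝ) = 0 := by
    rw [← Finset.mul_sum, ← sum_inner, hsum, inner_zero_left, mul_zero]
  have htot : ∑ i, ‖x i - c‖ ^ 2
      = ∑ i, ‖x i - m‖ ^ 2 + (0 + (n:ℝ) * ‖m - c‖ ^ 2) := by
    simp_rw [expand]
    rw [Finset.sum_add_distrib, Finset.sum_add_distrib, h2, Finset.sum_const,
      Finset.card_univ, Fintype.card_fin, nsmul_eq_mul]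
    ring
  rw [htot]
  have : 0 ≤ (n:ℝ) * ‖m - c‖ ^ 2 := by positivity
  linarith

end aux

set_option maxHeartbeats 1600000
set_option synthInstance.maxHeartbeats 400000

/-- With `F_i w := f_i (w - α ∇f_i w)` and `F := (1/n) ∑ F_i`, under `L`-smoothness,
gradient bound `B`, `ρ`-Lipschitz Hessians and the task-similarity conditions with
parameters `γ_G, γ_H`, for every `α ∈ [0, 1/L]` and every `w`,
`(1/n) ∑ᵢ ‖∇F_i(w) - ∇F(w)‖² ≤ 3B²α²γ_H² + 192γ_G²`. -/
theorem stmt_1 {d n : ℕ} (hn : 0 < n) (f : Fin n → EuclideanSpace ℝ (Fin d) → ℝ)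
    (L B ρ γG γH α : ℝ)
    (hf : ∀ i, ContDiff ℝ 2 (f i))
    (hsmooth : ∀ i w u, ‖gradient (f i) w - gradient (f i) u‖ ≤ L * ‖w - u‖)
    (hB : ∀ i w, ‖gradient (f i) w‖ ≤ B)
    (hρ : ∀ i w u, ‖fderiv ℝ (gradient (f i)) w - fderiv ℝ (gradient (f i)) u‖ ≤ ρ * ‖w - u‖)
    (hG : ∀ w, (1 / n : ℝ) * ∑ i, ‖gradient (f i) w -
        gradient (fun v => (1 / n : ℝ) * ∑ j, f j v) w‖ ^ 2 ≤ γG ^ 2)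
    (hH : ∀ w, (1 / n : ℝ) * ∑ i, ‖fderiv ℝ (gradient (f i)) w -
        fderiv ℝ (gradient (fun v => (1 / n : ℝ) * ∑ j, f j v)) w‖ ^ 2 ≤ γH ^ 2)
    (hα0 : 0 ≤ α) (hαL : α ≤ 1 / L) :
    ∀ w : EuclideanSpace ℝ (Fin d),
      (1 / n : ℝ) * ∑ i, ‖gradient (fun v => f i (v - α • gradient (f i) v)) w -
          gradient (fun v => (1 / n : ℝ) * ∑ j, f j (v - α • gradient (f j) v)) w‖ ^ 2 ≤
        3 * B ^ 2 * α ^ 2 * γH ^ 2 + 192 * γG ^ 2 := by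
  intro w
  classical
  -- basic sign facts
  have hL0 : 0 ≤ L := by
    by_contra h
    push_neg at h
    have h1 : (1:ℝ)/L < 0 := div_neg_of_pos_of_neg one_pos h
    linarith
  have hαL1 : α * L ≤ 1 := by
    rcases eq_or_lt_of_le hL0 with h | h
    · rw [← h]; norm_num
    · have := (le_div_iff₀ h).mp hαL
      linarith
  have hB0 : 0 ≤ B := le_trans (norm_nonneg _) (hB ⟨0, hn⟩ w)
  -- differentiability facts
  have hgC : ∀ i, ContDiff ℝ 1 (gradient (f i)) := by
    intro i
    have h1 : ContDiff ℝ 1 (fderiv ℝ (f i)) := (hf i).fderiv_right (by norm_num)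
    exact ((toDual ℝ (EuclideanSpace ℝ (Fin d))).symm.contDiff).comp h1
  have hgd : ∀ i, Differentiable ℝ (gradient (f i)) := fun i => (hgC i).differentiable one_ne_zero
  have hfd : ∀ i, Differentiable ℝ (f i) := fun i => (hf i).differentiable (by norm_num)
  set fbar : EuclideanSpace ℝ (Fin d) → ℝ := fun v => (1 / n : ℝ) * ∑ j, f j v with hfbar
  set u : EuclideanSpace ℝ (Fin d) := w - α • gradient fbar w with hu
  have hGw := hG w
  have hGu := hG u
  have hHw := hH w
  -- per-task derivative objects
  set H : Fin n → (EuclideanSpace ℝ (Fin d) →L[ℝ] EuclideanSpace ℝ (Fin d)) := fun i => fderiv ℝ (gradient (f i)) w with hHdef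
  set P : Fin n → (EuclideanSpace ℝ (Fin d) →L[ℝ] EuclideanSpace ℝ (Fin d)) := fun i => ContinuousLinearMap.id ℝ (EuclideanSpace ℝ (Fin d)) - α • H i with hPdef
  set A : Fin n → (EuclideanSpace ℝ (Fin d) →L[ℝ] ℝ) := fun i => fderiv ℝ (f i) (w - α • gradient (f i) w) with hAdef
  set D : Fin n → (EuclideanSpace ℝ (Fin d) →L[ℝ] ℝ) := fun i => (A i).comp (P i) with hDdef
  have hφ : ∀ i, HasFDerivAt (fun t => t - α • gradient (f i) t) (P i) w := by
    intro i
    exact (hasFDerivAt_id w).sub (((hgd i) w).hasFDerivAt.const_smul α)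
  have hDF : ∀ i, HasFDerivAt (fun v => f i (v - α • gradient (f i) v)) (D i) w := by
    intro i
    exact (((hfd i) (w - α • gradient (f i) w)).hasFDerivAt).comp w (hφ i)
  have hDFbar : HasFDerivAt (fun v => (1 / n : ℝ) * ∑ j, f j (v - α • gradient (f j) v))
      ((1 / n : ℝ) • ∑ j, D j) w :=
    (HasFDerivAt.fun_sum fun j _ => hDF j).const_mul _
  set Abar : (EuclideanSpace ℝ (Fin d) →L[ℝ] ℝ) := fderiv ℝ fbar u with hAbar
  set Hbar : (EuclideanSpace ℝ (Fin d) →L[ℝ] EuclideanSpace ℝ (Fin d)) :=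
    fderiv ℝ (gradient fbar) w with hHbar
  set T : (EuclideanSpace ℝ (Fin d) →L[ℝ] ℝ) :=
    Abar.comp (ContinuousLinearMap.id ℝ (EuclideanSpace ℝ (Fin d)) - α • Hbar) with hT
  set X : Fin n → EuclideanSpace ℝ (Fin d) :=
    fun i => (toDual ℝ (EuclideanSpace ℝ (Fin d))).symm (D i) with hXdef
  set c : EuclideanSpace ℝ (Fin d) := (toDual ℝ (EuclideanSpace ℝ (Fin d))).symm T with hc
  have hgradFi : ∀ i, gradient (fun v => f i (v - α • gradient (f i) v)) w = X i := by
    intro i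
    rw [gradient, (hDF i).fderiv]
  have hgradF : gradient (fun v => (1 / n : ℝ) * ∑ j, f j (v - α • gradient (f j) v)) w
      = (1 / (n:ℝ)) • ∑ j, X j := by
    rw [gradient, hDFbar.fderiv, map_smul, map_sum]
  have hXc : ∀ i, ‖X i - c‖ = ‖D i - T‖ := by
    intro i
    rw [hXdef, hc, ← map_sub, LinearIsometryEquiv.norm_map]
  -- ingredient bounds
  have hAB : ‖Abar‖ ≤ B := by
    have hfbarD : HasFDerivAt fbar ((1 / n : ℝ) • ∑ j, fderiv ℝ (f j) u) u := by
      rw [hfbar]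
      exact (HasFDerivAt.fun_sum fun j _ => ((hfd j) u).hasFDerivAt).const_mul _
    rw [hAbar, hfbarD.fderiv]
    have h1 : ‖(1 / n : ℝ) • ∑ j, fderiv ℝ (f j) u‖ ≤ (1 / n : ℝ) * ∑ j, ‖fderiv ℝ (f j) u‖ := by
      rw [norm_smul, Real.norm_of_nonneg (by positivity)]
      exact mul_le_mul_of_nonneg_left (norm_sum_le _ _) (by positivity)
    have h2 : ∑ j, ‖fderiv ℝ (f j) u‖ ≤ (n : ℝ) * B := by
      calc ∑ j, ‖fderiv ℝ (f j) u‖ ≤ ∑ _j : Fin n, B := by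
            refine Finset.sum_le_sum fun j _ => ?_
            rw [norm_fderiv_eq']
            exact hB j u
        _ = (n : ℝ) * B := by simp [mul_comm]
    have hn' : (0:ℝ) < n := Nat.cast_pos.mpr hn
    calc ‖(1 / n : ℝ) • ∑ j, fderiv ℝ (f j) u‖ ≤ (1 / n : ℝ) * ((n:ℝ) * B) := by
          refine le_trans h1 (mul_le_mul_of_nonneg_left h2 (by positivity))
      _ = B := by field_simp
  have key : ∀ i, ‖D i - T‖ ≤
      2 * ‖gradient (f i) w - gradient fbar w‖ + 2 * ‖gradient (f i) u - gradient fbar u‖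
        + B * (α * ‖H i - Hbar‖) := by
    intro i
    have hHiL : ‖H i‖ ≤ L := by
      have lip : LipschitzWith ⟨L, hL0⟩ (gradient (f i)) :=
        LipschitzWith.of_dist_le_mul (fun x y => by
          rw [dist_eq_norm, dist_eq_norm]; exact hsmooth i x y)
      exact norm_fderiv_le_of_lipschitz ℝ lip (x₀ := w)
    have hPi : ‖P i‖ ≤ 2 := by
      rw [hPdef]
      have h1 : ‖α • H i‖ = α * ‖H i‖ := by
        rw [norm_smul α (H i), Real.norm_of_nonneg hα0]
      have h2 : ‖ContinuousLinearMap.id ℝ (EuclideanSpace ℝ (Fin d))‖ ≤ 1 :=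
        ContinuousLinearMap.norm_id_le
      have h3 : α * ‖H i‖ ≤ α * L := mul_le_mul_of_nonneg_left hHiL hα0
      calc ‖ContinuousLinearMap.id ℝ (EuclideanSpace ℝ (Fin d)) - α • H i‖
          ≤ ‖ContinuousLinearMap.id ℝ (EuclideanSpace ℝ (Fin d))‖ + ‖α • H i‖ :=
            norm_sub_le _ _
        _ ≤ 2 := by rw [h1]; linarith
    have hAiA : ‖A i - Abar‖ ≤
        ‖gradient (f i) w - gradient fbar w‖ + ‖gradient (f i) u - gradient fbar u‖ := by
      have step1 : ‖A i - fderiv ℝ (f i) u‖ ≤ ‖gradient (f i) w - gradient fbar w‖ := by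
        rw [hAdef, norm_fderiv_sub_eq]
        have hpt : (w - α • gradient (f i) w) - u
            = α • (gradient fbar w - gradient (f i) w) := by
          rw [hu, smul_sub]; abel
        calc ‖gradient (f i) (w - α • gradient (f i) w) - gradient (f i) u‖
            ≤ L * ‖(w - α • gradient (f i) w) - u‖ := hsmooth i _ _
          _ = (α * L) * ‖gradient (f i) w - gradient fbar w‖ := by
              rw [hpt, norm_smul, Real.norm_of_nonneg hα0, norm_sub_rev]; ring
          _ ≤ 1 * ‖gradient (f i) w - gradient fbar w‖ :=
              mul_le_mul_of_nonneg_right hαL1 (norm_nonneg _)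
          _ = ‖gradient (f i) w - gradient fbar w‖ := one_mul _
      have step2 : ‖fderiv ℝ (f i) u - Abar‖ = ‖gradient (f i) u - gradient fbar u‖ := by
        rw [hAbar, norm_fderiv_sub_eq]
      calc ‖A i - Abar‖ ≤ ‖A i - fderiv ℝ (f i) u‖ + ‖fderiv ℝ (f i) u - Abar‖ :=
            norm_sub_le_norm_sub_add_norm_sub _ _ _
        _ ≤ _ := by rw [step2]; exact add_le_add_left step1 _
    have hdec : D i - T = ((A i - Abar).comp (P i)) + (Abar.comp (α • (Hbar - H i))) := by
      ext x
      simp only [hDdef, hT, hPdef, ContinuousLinearMap.add_apply, ContinuousLinearMap.sub_apply,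
        ContinuousLinearMap.comp_apply, ContinuousLinearMap.smul_apply,
        ContinuousLinearMap.id_apply, map_sub, map_smul, smul_sub]
      ring
    have h1 : ‖(A i - Abar).comp (P i)‖ ≤
        (‖gradient (f i) w - gradient fbar w‖ + ‖gradient (f i) u - gradient fbar u‖) * 2 :=
      le_trans (ContinuousLinearMap.opNorm_comp_le _ _)
        (mul_le_mul hAiA hPi (norm_nonneg _) (by positivity))
    have h2 : ‖Abar.comp (α • (Hbar - H i))‖ ≤
        B * (α * ‖H i - Hbar‖) := by
      refine le_trans (ContinuousLinearMap.opNorm_comp_le _ _) ?_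
      have hnorm : ‖α • (Hbar - H i)‖ = α * ‖H i - Hbar‖ := by
        rw [norm_smul α (Hbar - H i), Real.norm_of_nonneg hα0, norm_sub_rev Hbar (H i)]
      rw [hnorm]
      exact mul_le_mul_of_nonneg_right hAB (by positivity)
    calc ‖D i - T‖ ≤ ‖(A i - Abar).comp (P i)‖ + ‖Abar.comp (α • (Hbar - H i))‖ := by
          rw [hdec]; exact norm_add_le _ _
      _ ≤ _ := by
          refine add_le_add (le_trans h1 (le_of_eq ?_)) h2
          ring
  -- squared pointwise bound
  have hHw' : (1 / n : ℝ) * ∑ i, ‖H i - Hbar‖ ^ 2 ≤ γH ^ 2 := hHw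
  have hsq : ∀ i, ‖X i - c‖ ^ 2 ≤
      12 * ‖gradient (f i) w - gradient fbar w‖ ^ 2
        + 12 * ‖gradient (f i) u - gradient fbar u‖ ^ 2
        + 3 * B ^ 2 * α ^ 2 * ‖H i - Hbar‖ ^ 2 := by
    intro i
    have hk := key i
    rw [← hXc i] at hk
    have h0 : 0 ≤ ‖X i - c‖ := norm_nonneg _
    set p := ‖gradient (f i) w - gradient fbar w‖ with hp
    set q := ‖gradient (f i) u - gradient fbar u‖ with hq
    set r := ‖H i - Hbar‖ with hr
    have hp0 : 0 ≤ p := norm_nonneg _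
    have hq0 : 0 ≤ q := norm_nonneg _
    have hr0 : 0 ≤ r := norm_nonneg _
    have hbr0 : 0 ≤ B * (α * r) := by positivity
    nlinarith [sq_nonneg (p - q), sq_nonneg (2*p - B*(α*r)), sq_nonneg (2*q - B*(α*r)),
      sq_nonneg (p + q), mul_nonneg hp0 hq0, mul_nonneg (mul_nonneg hp0 hq0) hbr0,
      mul_nonneg hp0 hbr0, mul_nonneg hq0 hbr0]
  -- final assembly
  simp only [hgradFi, hgradF]
  have hvar := variance_le hn X c
  have hn' : (0:ℝ) < n := Nat.cast_pos.mpr hn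
  have hstep1 : (1 / n : ℝ) * ∑ i, ‖X i - (1 / (n:ℝ)) • ∑ j, X j‖ ^ 2
      ≤ (1 / n : ℝ) * ∑ i, ‖X i - c‖ ^ 2 :=
    mul_le_mul_of_nonneg_left hvar (by positivity)
  have hstep2 : (1 / n : ℝ) * ∑ i, ‖X i - c‖ ^ 2
      ≤ 12 * ((1 / n : ℝ) * ∑ i, ‖gradient (f i) w - gradient fbar w‖ ^ 2)
        + 12 * ((1 / n : ℝ) * ∑ i, ‖gradient (f i) u - gradient fbar u‖ ^ 2)
        + 3 * B ^ 2 * α ^ 2 *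
            ((1 / n : ℝ) * ∑ i, ‖H i - Hbar‖ ^ 2) := by
    have hsum := Finset.sum_le_sum (fun i (_ : i ∈ Finset.univ) => hsq i)
    calc (1 / n : ℝ) * ∑ i, ‖X i - c‖ ^ 2
        ≤ (1 / n : ℝ) * ∑ i, (12 * ‖gradient (f i) w - gradient fbar w‖ ^ 2
            + 12 * ‖gradient (f i) u - gradient fbar u‖ ^ 2
            + 3 * B ^ 2 * α ^ 2 * ‖H i - Hbar‖ ^ 2) :=
          mul_le_mul_of_nonneg_left hsum (by positivity)
      _ = _ := by
          rw [Finset.sum_add_distrib, Finset.sum_add_distrib, ← Finset.mul_sum,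
            ← Finset.mul_sum, ← Finset.mul_sum]
          ring
  have hBa2 : (0:ℝ) ≤ 3 * B ^ 2 * α ^ 2 := by positivity
  have hγG2 : (0:ℝ) ≤ γG ^ 2 := sq_nonneg _
  calc (1 / n : ℝ) * ∑ i, ‖X i - (1 / (n:ℝ)) • ∑ j, X j‖ ^ 2
      ≤ 12 * ((1 / n : ℝ) * ∑ i, ‖gradient (f i) w - gradient fbar w‖ ^ 2)
        + 12 * ((1 / n : ℝ) * ∑ i, ‖gradient (f i) u - gradient fbar u‖ ^ 2)
        + 3 * B ^ 2 * α ^ 2 *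
            ((1 / n : ℝ) * ∑ i, ‖H i - Hbar‖ ^ 2) :=
        le_trans hstep1 hstep2
    _ ≤ 3 * B ^ 2 * α ^ 2 * γH ^ 2 + 192 * γG ^ 2 := by
        nlinarith [hGw, hGu, hHw', mul_le_mul_of_nonneg_left hHw' hBa2]
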